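/- arXiv:1706.02887 — 2 statements merged into one kernel-verified Lean document; each statement's English description precedes it below -/
import Mathlib

section
/- Let a > 0 and let f : ℝ² → ℝ be the linear ridge function f(x₁, x₂) = x₁ + a·|x₂|. Then for every point m = (m₁, 0) on the ridge and every σ > 0, the success probability satisfies p_f^<(m, σ) = N(m, σ²I)({x ∈ ℝ² | x₁ + a·|x₂| < m₁}) = arctan(1/a)/π. In particular, every such point is p-improvable for every p < arccot(a)/π. -/
open MeasureTheory Set Filter
open Real (pi_pos)
open scoped Real

/-- Isotropic Gaussian measure `N(m, σ²I)` on `ℝ^d`, defined by its density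
`x ↦ (2π)^{-d/2} σ^{-d} exp(−‖x−m‖²/(2σ²))` w.r.t. Lebesgue measure. -/
noncomputable def gaussES (d : ℕ) (m : EuclideanSpace ℝ (Fin d)) (σ : ℝ) :
    Measure (EuclideanSpace ℝ (Fin d)) :=
  volume.withDensity fun x =>
    ENNReal.ofReal ((2 * Real.pi) ^ (-(d : ℝ) / 2) * (σ ^ d)⁻¹ *
      Real.exp (-‖x - m‖ ^ 2 / (2 * σ ^ 2)))

/-- Success probability of strict improvement: `p_f^<(m,σ)`. -/
noncomputable def pLt (d : ℕ) (f : EuclideanSpace ℝ (Fin d) → ℝ)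
    (m : EuclideanSpace ℝ (Fin d)) (σ : ℝ) : ENNReal :=
  gaussES d m σ {x | f x < f m}

/-- Success probability of weak improvement: `p_f^≤(m,σ)`. -/
noncomputable def pLe (d : ℕ) (f : EuclideanSpace ℝ (Fin d) → ℝ)
    (m : EuclideanSpace ℝ (Fin d)) (σ : ℝ) : ENNReal :=
  gaussES d m σ {x | f x ≤ f m}

/-- Lower step-size threshold `ξ_p^f(m) = inf {σ > 0 | p_f^<(m,σ) ≤ p}`, with `inf ∅ = ∞`. -/
noncomputable def xiES (d : ℕ) (f : EuclideanSpace ℝ (Fin d) → ℝ) (p : ℝ)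
    (m : EuclideanSpace ℝ (Fin d)) : ENNReal :=
  sInf {s : ENNReal | ∃ σ : ℝ, 0 < σ ∧ s = ENNReal.ofReal σ ∧ pLt d f m σ ≤ ENNReal.ofReal p}

/-- Upper step-size threshold `η_p^f(m) = sup {σ > 0 | p_f^≤(m,σ) ≥ p}`, with `sup ∅ = 0`. -/
noncomputable def etaES (d : ℕ) (f : EuclideanSpace ℝ (Fin d) → ℝ) (p : ℝ)
    (m : EuclideanSpace ℝ (Fin d)) : ENNReal :=
  sSup {s : ENNReal | ∃ σ : ℝ, 0 < σ ∧ s = ENNReal.ofReal σ ∧ ENNReal.ofReal p ≤ pLe d f m σ}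


lemma radial_int {b : ℝ} (hb : 0 < b) :
    ∫ r in Ioi (0:ℝ), r * Real.exp (-b * r ^ 2) = (2 * b)⁻¹ := by
  have A : ∀ x : ℝ, HasDerivAt (fun x => -(2 * b)⁻¹ * Real.exp (-b * x ^ 2))
      (x * Real.exp (-b * x ^ 2)) x := by
    intro x
    convert ((hasDerivAt_pow 2 x).const_mul (-b)).exp.const_mul (-(2 * b)⁻¹) using 1
    · rfl
    · rfl
    field_simp
    ring
  have B : Tendsto (fun y : ℝ ↦ -(2 * b)⁻¹ * Real.exp (-b * y ^ 2))
      atTop (nhds (-(2 * b)⁻¹ * 0)) := by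
    refine Tendsto.const_mul _ ?_
    exact Real.tendsto_exp_atBot.comp
      ((tendsto_pow_atTop two_ne_zero).const_mul_atTop_of_neg (neg_lt_zero.2 hb))
  have := integral_Ioi_of_hasDerivAt_of_tendsto' (a := 0) (fun x _ => A x)
    (integrable_mul_exp_neg_mul_sq hb).integrableOn B
  simpa using this

lemma trig_key {a t : ℝ} (ha : 0 < a) (ht0 : 0 ≤ t) (htπ : t < π) :
    Real.cos t + a * Real.sin t < 0 ↔ π - Real.arctan (1 / a) < t := by
  have hα0 : 0 < Real.arctan (1 / a) := by
    have := Real.arctan_strictMono (show (0:ℝ) < 1/a by positivity)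
    simpa [Real.arctan_zero] using this
  have hα2 : Real.arctan (1 / a) < π / 2 := Real.arctan_lt_pi_div_two _
  rcases le_or_gt t (π / 2) with h | h
  · constructor
    · intro hlt
      exfalso
      have hc : 0 ≤ Real.cos t := Real.cos_nonneg_of_mem_Icc ⟨by linarith [Real.pi_pos], h⟩
      have hs : 0 ≤ Real.sin t := Real.sin_nonneg_of_nonneg_of_le_pi ht0 htπ.le
      nlinarith
    · intro hgt; linarith
  · have hcos : Real.cos t = -Real.cos (t - π) := by rw [Real.cos_sub_pi, neg_neg]
    have hsin : Real.sin t = -Real.sin (t - π) := by rw [Real.sin_sub_pi, neg_neg]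
    have hφ1 : -(π/2) < t - π := by linarith
    have hφ2 : t - π < 0 := by linarith
    have hcφ : 0 < Real.cos (t - π) :=
      Real.cos_pos_of_mem_Ioo ⟨hφ1, by linarith [Real.pi_pos]⟩
    rw [hcos, hsin]
    have htan : Real.tan (t - π) * Real.cos (t - π) = Real.sin (t - π) :=
      Real.tan_mul_cos hcφ.ne'
    have harct : Real.arctan (Real.tan (t - π)) = t - π :=
      Real.arctan_tan hφ1 (by linarith [Real.pi_pos])
    have hiff : -(1/a) < Real.tan (t - π) ↔ π - Real.arctan (1/a) < t := by
      rw [← Real.arctan_strictMono.lt_iff_lt, harct, Real.arctan_neg]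
      constructor <;> intro <;> linarith
    constructor
    · intro hlt
      have h1 : 0 < Real.cos (t - π) + a * Real.sin (t - π) := by linarith
      rw [← htan] at h1
      refine hiff.1 ?_
      by_contra hc
      push_neg at hc
      have h3 : a * Real.tan (t - π) ≤ -1 := by
        have := mul_le_mul_of_nonneg_left hc ha.le
        rw [mul_neg, mul_one_div, div_self ha.ne'] at this
        linarith
      nlinarith
    · intro hgt
      have h2 := hiff.2 hgt
      have h3 : -1 < a * Real.tan (t - π) := by
        have := mul_lt_mul_of_pos_left h2 ha
        rw [mul_neg, mul_one_div, div_self ha.ne'] at this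
        linarith
      have h1 : 0 < Real.cos (t - π) + a * Real.sin (t - π) := by
        rw [← htan]; nlinarith
      linarith

lemma angle_set {a : ℝ} (ha : 0 < a) :
    Ioo (-π) π ∩ {θ : ℝ | Real.cos θ + a * |Real.sin θ| < 0}
      = Ioo (-π) (Real.arctan (1 / a) - π) ∪ Ioo (π - Real.arctan (1 / a)) π := by
  have hα0 : 0 < Real.arctan (1 / a) := by
    have := Real.arctan_strictMono (show (0:ℝ) < 1/a by positivity)
    simpa [Real.arctan_zero] using this
  have hα2 : Real.arctan (1 / a) < π / 2 := Real.arctan_lt_pi_div_two _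
  have hπ := Real.pi_pos
  ext θ
  simp only [mem_inter_iff, mem_Ioo, mem_setOf_eq, mem_union]
  rcases le_or_gt 0 θ with h0 | h0
  · constructor
    · rintro ⟨⟨h1, h2⟩, h3⟩
      have hs : |Real.sin θ| = Real.sin θ :=
        abs_of_nonneg (Real.sin_nonneg_of_nonneg_of_le_pi h0 h2.le)
      rw [hs] at h3
      exact Or.inr ⟨(trig_key ha h0 h2).1 h3, h2⟩
    · rintro (⟨h1, h2⟩ | ⟨h1, h2⟩)
      · exfalso; linarith
      · have h0' : 0 ≤ θ := by linarith
        have hs : |Real.sin θ| = Real.sin θ :=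
          abs_of_nonneg (Real.sin_nonneg_of_nonneg_of_le_pi h0' h2.le)
        exact ⟨⟨by linarith, h2⟩, by rw [hs]; exact (trig_key ha h0' h2).2 h1⟩
  · have hc : Real.cos θ = Real.cos (-θ) := (Real.cos_neg θ).symm
    have hs : ∀ _ : -π < θ, |Real.sin θ| = Real.sin (-θ) := fun h1 => by
      rw [Real.sin_neg, abs_of_nonpos]
      exact Real.sin_nonpos_of_nonpos_of_neg_pi_le h0.le h1.le
    constructor
    · rintro ⟨⟨h1, h2⟩, h3⟩
      rw [hc, hs h1] at h3
      have := (trig_key ha (by linarith) (by linarith)).1 h3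
      exact Or.inl ⟨h1, by linarith⟩
    · rintro (⟨h1, h2⟩ | ⟨h1, h2⟩)
      · refine ⟨⟨h1, by linarith⟩, ?_⟩
        rw [hc, hs h1]
        exact (trig_key ha (by linarith) (by linarith)).2 (by linarith)
      · exfalso; linarith

noncomputable def T2 : EuclideanSpace ℝ (Fin 2) ≃ᵐ ℝ × ℝ :=
  (MeasurableEquiv.toLp 2 (Fin 2 → ℝ)).symm.trans (MeasurableEquiv.finTwoArrow)

lemma T2mp : MeasurePreserving T2 volume volume :=
  (volume_preserving_finTwoArrow ℝ).comp (EuclideanSpace.volume_preserving_symm_measurableEquiv_toLp (Fin 2))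

lemma norm_sq_ES (y : EuclideanSpace ℝ (Fin 2)) : ‖y‖ ^ 2 = (y 0) ^ 2 + (y 1) ^ 2 := by
  rw [EuclideanSpace.norm_eq, Real.sq_sqrt (by positivity)]
  simp [Fin.sum_univ_two, sq_abs]


lemma main_calc {a σ : ℝ} (ha : 0 < a) (hσ : 0 < σ)
    (m : EuclideanSpace ℝ (Fin 2)) (hm : m 1 = 0) :
    (volume.withDensity fun x : EuclideanSpace ℝ (Fin 2) =>
        ENNReal.ofReal ((2 * Real.pi) ^ (-(2 : ℝ) / 2) * (σ ^ 2)⁻¹ *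
          Real.exp (-‖x - m‖ ^ 2 / (2 * σ ^ 2))))
      {x : EuclideanSpace ℝ (Fin 2) | x 0 + a * |x 1| < m 0}
      = ENNReal.ofReal (Real.arctan (1 / a) / Real.pi) := by
  have hπ := Real.pi_pos
  set α := Real.arctan (1 / a) with hα
  have hα0 : 0 < α := by
    have := Real.arctan_strictMono (show (0:ℝ) < 1/a by positivity)
    simpa [Real.arctan_zero, hα] using this
  have hα2 : α < π / 2 := Real.arctan_lt_pi_div_two _
  set c : ℝ := (2 * π)⁻¹ * (σ ^ 2)⁻¹ with hc
  have hc0 : 0 < c := by positivity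
  have hcoef : (2 * Real.pi) ^ (-(2 : ℝ) / 2) * ((σ:ℝ) ^ 2)⁻¹ = c := by
    rw [show -(2:ℝ)/2 = -1 by norm_num, Real.rpow_neg_one, hc]
  simp only [hcoef]
  set b : ℝ := (2 * σ ^ 2)⁻¹ with hb
  have hb0 : 0 < b := by positivity
  -- measurability
  have hSmeas : MeasurableSet {x : EuclideanSpace ℝ (Fin 2) | x 0 + a * |x 1| < m 0} :=
    measurableSet_lt (by fun_prop) measurable_const
  have hUmeas : MeasurableSet {p : ℝ × ℝ | p.1 + a * |p.2| < 0} :=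
    measurableSet_lt (by fun_prop) measurable_const
  rw [withDensity_apply _ hSmeas]
  -- transfer to ℝ × ℝ
  have key : ∫⁻ x in {x : EuclideanSpace ℝ (Fin 2) | x 0 + a * |x 1| < m 0},
        ENNReal.ofReal (c * Real.exp (-‖x - m‖ ^ 2 / (2 * σ ^ 2))) ∂volume
      = ∫⁻ p in {p : ℝ × ℝ | p.1 + a * |p.2| < 0},
        ENNReal.ofReal (c * Real.exp (-(p.1 ^ 2 + p.2 ^ 2) / (2 * σ ^ 2))) ∂volume := by
    rw [← lintegral_indicator hSmeas, ← lintegral_indicator hUmeas]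
    set F : EuclideanSpace ℝ (Fin 2) → ENNReal := Set.indicator
        {x : EuclideanSpace ℝ (Fin 2) | x 0 + a * |x 1| < m 0}
        (fun x => ENNReal.ofReal (c * Real.exp (-‖x - m‖ ^ 2 / (2 * σ ^ 2)))) with hF
    have hFmeas : Measurable F := by
      apply Measurable.indicator _ hSmeas
      fun_prop
    have step1 : ∫⁻ x, F x ∂(volume : Measure (EuclideanSpace ℝ (Fin 2)))
        = ∫⁻ p : ℝ × ℝ, F (T2.symm p) ∂volume :=
      ((MeasurePreserving.symm T2 T2mp).lintegral_comp hFmeas).symm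
    have step2 : ∫⁻ p : ℝ × ℝ, F (T2.symm p) ∂volume
        = ∫⁻ p : ℝ × ℝ, F (T2.symm (p + ((m 0 : ℝ), (0:ℝ)))) ∂volume :=
      ((measurePreserving_add_right volume ((m 0 : ℝ), (0:ℝ))).lintegral_comp
        (hFmeas.comp T2.symm.measurable)).symm
    rw [step1, step2]
    congr 1
    funext p
    have hx0 : (T2.symm (p + ((m 0 : ℝ), (0:ℝ)))) 0 = p.1 + m 0 := rfl
    have hx1 : (T2.symm (p + ((m 0 : ℝ), (0:ℝ)))) 1 = p.2 + 0 := rfl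
    have hnorm : ‖T2.symm (p + ((m 0 : ℝ), (0:ℝ))) - m‖ ^ 2 = p.1 ^ 2 + p.2 ^ 2 := by
      rw [norm_sq_ES]
      have h0 : (T2.symm (p + ((m 0 : ℝ), (0:ℝ))) - m) 0 = p.1 + m 0 - m 0 := rfl
      have h1 : (T2.symm (p + ((m 0 : ℝ), (0:ℝ))) - m) 1 = p.2 + 0 - m 1 := rfl
      rw [h0, h1, hm]
      ring
    have hmem : T2.symm (p + ((m 0 : ℝ), (0:ℝ))) ∈
        {x : EuclideanSpace ℝ (Fin 2) | x 0 + a * |x 1| < m 0} ↔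
        p ∈ {p : ℝ × ℝ | p.1 + a * |p.2| < 0} := by
      simp only [mem_setOf_eq, hx0, hx1, add_zero]
      constructor <;> intro h <;> linarith
    by_cases hp : p ∈ {p : ℝ × ℝ | p.1 + a * |p.2| < 0}
    · rw [hF, Set.indicator_of_mem hp, Set.indicator_of_mem (hmem.2 hp), hnorm]
    · rw [hF, Set.indicator_of_notMem hp, Set.indicator_of_notMem (fun h => hp (hmem.1 h))]
  rw [key]
  -- convert to a Bochner integral
  have hInt : IntegrableOn (fun p : ℝ × ℝ => c * Real.exp (-(p.1 ^ 2 + p.2 ^ 2) / (2 * σ ^ 2)))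
      {p : ℝ × ℝ | p.1 + a * |p.2| < 0} volume := by
    apply Integrable.integrableOn
    have heq : (fun p : ℝ × ℝ => c * Real.exp (-(p.1 ^ 2 + p.2 ^ 2) / (2 * σ ^ 2)))
        = fun p => c * (Real.exp (-b * p.1 ^ 2) * Real.exp (-b * p.2 ^ 2)) := by
      funext p
      rw [← Real.exp_add]
      congr 1
      rw [hb]
      field_simp
      ring
    rw [heq, Measure.volume_eq_prod]
    exact (((integrable_exp_neg_mul_sq hb0).mul_prod (integrable_exp_neg_mul_sq hb0)).const_mul c)
  rw [← ofReal_integral_eq_lintegral_ofReal hInt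
    (Filter.Eventually.of_forall fun p => by positivity)]
  congr 1
  -- polar coordinates
  rw [← integral_indicator hUmeas, ← integral_comp_polarCoord_symm]
  have hcong : EqOn (fun p : ℝ × ℝ => p.1 • Set.indicator {p : ℝ × ℝ | p.1 + a * |p.2| < 0}
        (fun p => c * Real.exp (-(p.1 ^ 2 + p.2 ^ 2) / (2 * σ ^ 2))) (polarCoord.symm p))
      (fun p : ℝ × ℝ => (p.1 * (c * Real.exp (-b * p.1 ^ 2))) *
        Set.indicator {θ : ℝ | Real.cos θ + a * |Real.sin θ| < 0} (fun _ => (1:ℝ)) p.2)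
      polarCoord.target := by
    rintro ⟨r, θ⟩ hp
    simp only [polarCoord_target, mem_prod, mem_Ioi, mem_Ioo] at hp
    obtain ⟨hr, hθ⟩ := hp
    dsimp only
    have hsymm : polarCoord.symm (r, θ) = (r * Real.cos θ, r * Real.sin θ) := rfl
    have hexp : -((r * Real.cos θ) ^ 2 + (r * Real.sin θ) ^ 2) / (2 * σ ^ 2) = -b * r ^ 2 := by
      have h1 := Real.sin_sq_add_cos_sq θ
      rw [hb]
      field_simp
      nlinarith
    have hmem : (r * Real.cos θ, r * Real.sin θ) ∈ {p : ℝ × ℝ | p.1 + a * |p.2| < 0} ↔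
        θ ∈ {θ : ℝ | Real.cos θ + a * |Real.sin θ| < 0} := by
      simp only [mem_setOf_eq, abs_mul, abs_of_pos hr]
      constructor <;> intro h <;> nlinarith
    rw [hsymm]
    by_cases hθA : θ ∈ {θ : ℝ | Real.cos θ + a * |Real.sin θ| < 0}
    · rw [Set.indicator_of_mem (hmem.2 hθA), Set.indicator_of_mem hθA, smul_eq_mul, hexp]
      ring
    · rw [Set.indicator_of_notMem (fun h => hθA (hmem.1 h)), Set.indicator_of_notMem hθA,
        smul_eq_mul]
      ring
  rw [setIntegral_congr_fun (polarCoord.open_target.measurableSet) hcong]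
  rw [polarCoord_target, Measure.volume_eq_prod,
    setIntegral_prod_mul (fun r : ℝ => r * (c * Real.exp (-b * r ^ 2)))
      (fun θ : ℝ => Set.indicator {θ : ℝ | Real.cos θ + a * |Real.sin θ| < 0}
        (fun _ => (1:ℝ)) θ) (Ioi (0:ℝ)) (Ioo (-π) π)]
  -- radial factor
  have hrad : ∫ r in Ioi (0:ℝ), r * (c * Real.exp (-b * r ^ 2)) = c * (2 * b)⁻¹ := by
    rw [show (fun r : ℝ => r * (c * Real.exp (-b * r ^ 2)))
        = fun r => c * (r * Real.exp (-b * r ^ 2)) from funext fun r => by ring]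
    rw [integral_const_mul, radial_int hb0]
  -- angular factor
  have hang : ∫ θ in Ioo (-π) π,
      Set.indicator {θ : ℝ | Real.cos θ + a * |Real.sin θ| < 0} (fun _ => (1:ℝ)) θ
      = 2 * α := by
    have hAmeas : MeasurableSet {θ : ℝ | Real.cos θ + a * |Real.sin θ| < 0} :=
      measurableSet_lt (by fun_prop) measurable_const
    rw [setIntegral_indicator hAmeas, setIntegral_const, smul_eq_mul, mul_one]
    rw [angle_set ha]
    rw [measureReal_union (h₁ := measure_Ioo_lt_top.ne) (h₂ := measure_Ioo_lt_top.ne) (by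
        apply Set.disjoint_left.2
        rintro θ ⟨h1, h2⟩ ⟨h3, h4⟩
        simp only [mem_Ioo] at *
        linarith) measurableSet_Ioo]
    rw [Real.volume_real_Ioo, Real.volume_real_Ioo]
    rw [max_eq_left (by linarith), max_eq_left (by linarith)]
    ring
  rw [hrad, hang]
  have h2b : (2 * b)⁻¹ = σ ^ 2 := by
    rw [hb]
    field_simp
  rw [h2b, hc]
  field_simp

/-- For the linear ridge `f(x₁,x₂) = x₁ + a·|x₂|` (`a > 0`),
at every ridge point `m = (m₁, 0)` and every `σ > 0` the success probability is
`p_f^<(m,σ) = arctan(1/a)/π`; in particular every such point is `p`-improvable for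
every `p < arccot(a)/π = arctan(1/a)/π`. -/
theorem linear_ridge_success
    (a : ℝ) (ha : 0 < a)
    (f : EuclideanSpace ℝ (Fin 2) → ℝ)
    (hf : ∀ x : EuclideanSpace ℝ (Fin 2), f x = x 0 + a * |x 1|) :
    ∀ m : EuclideanSpace ℝ (Fin 2), m 1 = 0 →
      (∀ σ : ℝ, 0 < σ →
        pLt 2 f m σ = ENNReal.ofReal (Real.arctan (1 / a) / Real.pi)) ∧
      ∀ p : ℝ, p < Real.arctan (1 / a) / Real.pi → 0 < xiES 2 f p m := by
  intro m hm
  have hq : 0 < Real.arctan (1 / a) / Real.pi := by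
    have hα0 : 0 < Real.arctan (1 / a) := by
      have := Real.arctan_strictMono (show (0:ℝ) < 1/a by positivity)
      simpa [Real.arctan_zero] using this
    have := Real.pi_pos
    positivity
  have part1 : ∀ σ : ℝ, 0 < σ →
      pLt 2 f m σ = ENNReal.ofReal (Real.arctan (1 / a) / Real.pi) := by
    intro σ hσ
    have hfm : f m = m 0 := by rw [hf, hm]; simp
    have hS : {x : EuclideanSpace ℝ (Fin 2) | f x < f m}
        = {x : EuclideanSpace ℝ (Fin 2) | x 0 + a * |x 1| < m 0} := by
      ext x; simp only [Set.mem_setOf_eq, hf x, hf m, hm]; simp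
    unfold pLt gaussES
    rw [hS]
    have hcast : (((2:ℕ) : ℝ)) = (2 : ℝ) := by norm_num
    simp only [hcast]
    exact main_calc ha hσ m hm
  refine ⟨part1, fun p hp => ?_⟩
  have hempty : {s : ENNReal | ∃ σ : ℝ, 0 < σ ∧ s = ENNReal.ofReal σ ∧
      pLt 2 f m σ ≤ ENNReal.ofReal p} = ∅ := by
    ext s
    simp only [Set.mem_setOf_eq, Set.mem_empty_iff_false, iff_false]
    rintro ⟨σ, hσ, rfl, hle⟩
    rw [part1 σ hσ] at hle
    exact absurd hle (not_le.2 ((ENNReal.ofReal_lt_ofReal_iff hq).2 hp))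
  unfold xiES
  rw [hempty, sInf_empty]
  exact ENNReal.zero_lt_top
end

section
/- Let f : ℝ² → ℝ be the cubic saddle function f(x₁, x₂) = x₁³ + x₂². Then the success probability at the origin decays like the square root of the step size: there exist constants C > 0 and σ₀ ∈ (0,1] such that for all σ ∈ (0, σ₀], p_f^≤(0, σ) = N(0, σ²I)({x ∈ ℝ² | x₁³ + x₂² ≤ 0}) ≤ C·√σ. Consequently, for every c_- < 0 the cumulative success probability ∑_{t=0}^∞ p_f^≤(0, e^{t·c_-}) is finite. -/
open MeasureTheory Set Filter

section Aux
open Real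

lemma tendsto_aux {b : ℝ} (hb : 0 < b) (c : ℝ) :
    Tendsto (fun x : ℝ => c * Real.exp (-b * x ^ 2)) atTop (nhds 0) := by
  rw [show (0:ℝ) = c * 0 by ring]
  apply Tendsto.const_mul
  apply Real.tendsto_exp_atBot.comp
  apply Tendsto.const_mul_atTop_of_neg (by linarith : -b < 0)
  exact tendsto_pow_atTop (by norm_num)

lemma gauss_m1 {b : ℝ} (hb : 0 < b) :
    ∫ x in Ioi (0:ℝ), x * Real.exp (-b * x ^ 2) = (2*b)⁻¹ := by
  have hderiv : ∀ x ∈ Ici (0:ℝ),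
      HasDerivAt (fun x => -(2*b)⁻¹ * Real.exp (-b * x ^ 2)) (x * Real.exp (-b * x^2)) x := by
    intro x _
    have h : HasDerivAt (fun x : ℝ => -b * x ^ 2) (-b * (2*x)) x := by
      simpa using ((hasDerivAt_pow 2 x).const_mul (-b))
    have h2 := (h.exp).const_mul (-(2*b)⁻¹)
    refine h2.congr_deriv ?_
    field_simp
  have hint : IntegrableOn (fun x => x * Real.exp (-b * x^2)) (Ioi 0) :=
    (integrable_mul_exp_neg_mul_sq hb).integrableOn
  have := integral_Ioi_of_hasDerivAt_of_tendsto' hderiv hint (tendsto_aux hb _)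
  rw [this]; simp

lemma gauss_m3 {b : ℝ} (hb : 0 < b) :
    ∫ x in Ioi (0:ℝ), x ^ 3 * Real.exp (-b * x ^ 2) = (2*b^2)⁻¹ := by
  have hderiv : ∀ x ∈ Ici (0:ℝ),
      HasDerivAt (fun x => -(x^2/(2*b) + (2*b^2)⁻¹) * Real.exp (-b * x ^ 2))
        (x^3 * Real.exp (-b * x^2)) x := by
    intro x _
    have h : HasDerivAt (fun x : ℝ => -b * x ^ 2) (-b * (2*x)) x := by
      simpa using ((hasDerivAt_pow 2 x).const_mul (-b))
    have hp : HasDerivAt (fun x : ℝ => -(x^2/(2*b) + (2*b^2)⁻¹)) (-(2*x/(2*b))) x := by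
      have := ((hasDerivAt_pow 2 x).div_const (2*b)).add_const (2*b^2)⁻¹
      exact this.neg.congr_deriv (by norm_num)
    have h2 := hp.mul h.exp
    refine h2.congr_deriv ?_
    field_simp
    ring
  have hint : IntegrableOn (fun x : ℝ => x ^ 3 * Real.exp (-b * x^2)) (Ioi 0) := by
    have := integrableOn_rpow_mul_exp_neg_mul_sq hb (s := 3) (by norm_num)
    refine this.congr_fun (fun x hx => ?_) measurableSet_Ioi
    beta_reduce
    rw [show ((3:ℝ)) = ((3:ℕ):ℝ) by norm_num, Real.rpow_natCast]
  have htend : Tendsto (fun x : ℝ => -(x^2/(2*b) + (2*b^2)⁻¹) * Real.exp (-b * x ^ 2))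
      atTop (nhds 0) := by
    have h1 : (fun x : ℝ => -(x^2/(2*b) + (2*b^2)⁻¹) * Real.exp (-b * x ^ 2))
        = fun x : ℝ => -(2*b)⁻¹ * (x^2 * Real.exp (-b * x ^ 2)) + -(2*b^2)⁻¹ * Real.exp (-b*x^2) := by
      funext x; field_simp; ring
    rw [h1, show (0:ℝ) = -(2*b)⁻¹ * 0 + 0 by ring]
    apply Tendsto.add
    · apply Tendsto.const_mul
      have hy : Tendsto (fun x : ℝ => b * x ^ 2) atTop atTop := by
        apply Tendsto.const_mul_atTop hb
        exact tendsto_pow_atTop (by norm_num)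
      have := (Real.tendsto_pow_mul_exp_neg_atTop_nhds_zero 1).comp hy
      have h2 := this.const_mul b⁻¹
      rw [mul_zero] at h2
      refine h2.congr fun x => ?_
      simp only [Function.comp, pow_one]
      field_simp
    · exact tendsto_aux hb _
  have := integral_Ioi_of_hasDerivAt_of_tendsto' hderiv hint htend
  rw [this]; field_simp
  simp


lemma pLe_bound (f : EuclideanSpace ℝ (Fin 2) → ℝ)
    (hf : ∀ x : EuclideanSpace ℝ (Fin 2), f x = (x 0) ^ 3 + (x 1) ^ 2)
    {σ : ℝ} (hσ : 0 < σ) :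
    pLe 2 f 0 σ ≤ ENNReal.ofReal (3 / Real.pi * Real.sqrt σ) := by
  set b : ℝ := (2 * σ ^ 2)⁻¹ with hb_def
  have hb : 0 < b := by positivity
  set c : ℝ := (2 * Real.pi)⁻¹ * (σ ^ 2)⁻¹ with hc_def
  have hc : 0 < c := by positivity
  set D : EuclideanSpace ℝ (Fin 2) → ENNReal :=
    fun x => ENNReal.ofReal (c * Real.exp (-b * ((x 0)^2 + (x 1)^2))) with hD_def
  set S : Set (EuclideanSpace ℝ (Fin 2)) := {x | (x 0)^3 + (x 1)^2 ≤ 0} with hS_def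
  have hm0 : Measurable fun x : EuclideanSpace ℝ (Fin 2) => x 0 :=
    (measurable_pi_apply 0).comp (MeasurableEquiv.toLp 2 (Fin 2 → ℝ)).symm.measurable
  have hm1 : Measurable fun x : EuclideanSpace ℝ (Fin 2) => x 1 :=
    (measurable_pi_apply 1).comp (MeasurableEquiv.toLp 2 (Fin 2 → ℝ)).symm.measurable
  have hS : MeasurableSet S :=
    measurableSet_le ((hm0.pow_const 3).add (hm1.pow_const 2)) measurable_const
  have hf0 : f 0 = 0 := by rw [hf]; norm_num
  have hset : {x : EuclideanSpace ℝ (Fin 2) | f x ≤ f 0} = S := by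
    ext x; simp [hf, hf0, hS_def]
  have h1 : pLe 2 f 0 σ = ∫⁻ x in S, D x := by
    rw [pLe, gaussES, hset, withDensity_apply _ hS]
    refine lintegral_congr fun x => ?_
    rw [hD_def]
    congr 1
    have hx : ‖x - (0 : EuclideanSpace ℝ (Fin 2))‖ ^ 2 = (x 0)^2 + (x 1)^2 := by
      rw [sub_zero, EuclideanSpace.norm_eq, Real.sq_sqrt (by positivity)]
      simp [Fin.sum_univ_two, sq_abs]
    rw [hx, show (-((2:ℕ):ℝ)/2) = (-1:ℝ) by push_cast; norm_num, Real.rpow_neg_one]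
    rw [hc_def, hb_def]
    ring_nf
  set D' : ℝ × ℝ → ENNReal :=
    fun p => ENNReal.ofReal (c * Real.exp (-b * (p.1^2 + p.2^2))) with hD'_def
  set T : Set (ℝ × ℝ) := {p | p.1^3 + p.2^2 ≤ 0} with hT_def
  have hT : MeasurableSet T :=
    measurableSet_le ((measurable_fst.pow_const 3).add (measurable_snd.pow_const 2))
      measurable_const
  have hD'm : Measurable D' := by
    apply Measurable.ennreal_ofReal
    exact (((measurable_fst.pow_const 2).add (measurable_snd.pow_const 2)).const_mul
        (-b)).exp.const_mul c
  have hψ : MeasurePreserving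
      ((MeasurableEquiv.toLp 2 (Fin 2 → ℝ)).symm.trans (MeasurableEquiv.finTwoArrow))
      volume volume :=
    (volume_preserving_finTwoArrow ℝ).comp
      (EuclideanSpace.volume_preserving_symm_measurableEquiv_toLp (Fin 2))
  have h2 : ∫⁻ x in S, D x = ∫⁻ p in T, D' p := by
    rw [← lintegral_indicator hS D, ← lintegral_indicator hT D']
    rw [← hψ.lintegral_comp (hD'm.indicator hT)]
    rfl
  -- Fubini
  have h3 : ∫⁻ p in T, D' p = ∫⁻ x : ℝ, ∫⁻ y : ℝ, T.indicator D' (x, y) := by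
    rw [← lintegral_indicator hT D', Measure.volume_eq_prod ℝ ℝ, MeasureTheory.lintegral_prod _ (hD'm.indicator hT).aemeasurable]
  -- inner bound
  have hinner : ∀ x : ℝ, (∫⁻ y : ℝ, T.indicator D' (x, y)) ≤
      ENNReal.ofReal (c * Real.exp (-b * x^2) * (2 * Real.sqrt ((-x)^3))) := by
    intro x
    have hTx : MeasurableSet {y : ℝ | x^3 + y^2 ≤ 0} :=
      measurableSet_le ((measurable_id.pow_const 2).const_add _) measurable_const
    have heq : (fun y : ℝ => T.indicator D' (x, y))
        = {y : ℝ | x^3 + y^2 ≤ 0}.indicator (fun y => D' (x, y)) := by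
      funext y; rfl
    rw [heq, lintegral_indicator hTx]
    calc ∫⁻ y in {y : ℝ | x^3 + y^2 ≤ 0}, D' (x, y)
        ≤ ∫⁻ _ in {y : ℝ | x^3 + y^2 ≤ 0}, ENNReal.ofReal (c * Real.exp (-b * x^2)) := by
          refine setLIntegral_mono' hTx fun y _ => ?_
          apply ENNReal.ofReal_le_ofReal
          apply mul_le_mul_of_nonneg_left _ hc.le
          apply Real.exp_le_exp.2
          nlinarith [sq_nonneg y]
      _ = ENNReal.ofReal (c * Real.exp (-b * x^2)) * volume {y : ℝ | x^3 + y^2 ≤ 0} := by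
          rw [setLIntegral_const]
      _ ≤ ENNReal.ofReal (c * Real.exp (-b * x^2)) * ENNReal.ofReal (2 * Real.sqrt ((-x)^3)) := by
          apply mul_le_mul_right
          have hsub : {y : ℝ | x^3 + y^2 ≤ 0} ⊆ Icc (-Real.sqrt ((-x)^3)) (Real.sqrt ((-x)^3)) := by
            intro y hy
            have hy2 : y^2 ≤ (-x)^3 := by simp only [mem_setOf_eq] at hy; nlinarith
            have : |y| ≤ Real.sqrt ((-x)^3) := by
              rw [← Real.sqrt_sq_eq_abs]
              exact Real.sqrt_le_sqrt hy2
            exact abs_le.1 this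
          calc volume {y : ℝ | x^3 + y^2 ≤ 0} ≤ volume (Icc (-Real.sqrt ((-x)^3)) (Real.sqrt ((-x)^3))) :=
                measure_mono hsub
            _ = ENNReal.ofReal (2 * Real.sqrt ((-x)^3)) := by
                rw [Real.volume_Icc]; congr 1; ring
      _ = ENNReal.ofReal (c * Real.exp (-b * x^2) * (2 * Real.sqrt ((-x)^3))) := by
          rw [← ENNReal.ofReal_mul (by positivity)]
  -- outer bound function
  set g : ℝ → ℝ := fun x => (2 * c * Real.sqrt σ) * ((-x) * Real.exp (-b * x^2))
      + (2 * c * (σ * Real.sqrt σ)⁻¹) * ((-x)^3 * Real.exp (-b * x^2)) with hg_def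
  have hsqrtσ : 0 < Real.sqrt σ := Real.sqrt_pos.2 hσ
  have hkey : ∀ u : ℝ, 0 ≤ u →
      Real.sqrt (u^3) ≤ Real.sqrt σ * u + (σ * Real.sqrt σ)⁻¹ * u^3 := by
    intro u hu
    have hsu : 0 ≤ Real.sqrt u := Real.sqrt_nonneg u
    have h1 : Real.sqrt (u^3) = u * Real.sqrt u := by
      rw [show u^3 = u^2 * u by ring, Real.sqrt_mul (sq_nonneg u), Real.sqrt_sq hu]
    rw [h1]
    rcases le_total u σ with h | h
    · have : u * Real.sqrt u ≤ u * Real.sqrt σ := by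
        apply mul_le_mul_of_nonneg_left (Real.sqrt_le_sqrt h) hu
      nlinarith [mul_nonneg (mul_nonneg (inv_nonneg.2 (by positivity : (0:ℝ) ≤ σ * Real.sqrt σ)) hu) (mul_nonneg hu hu)]
    · have hss : σ * Real.sqrt σ ≤ u * Real.sqrt u :=
        mul_le_mul h (Real.sqrt_le_sqrt h) (Real.sqrt_nonneg σ) hu
      have hpos : (0:ℝ) < σ * Real.sqrt σ := by positivity
      have h2 : u * Real.sqrt u ≤ (σ * Real.sqrt σ)⁻¹ * u^3 := by
        rw [← div_eq_inv_mul, le_div_iff₀ hpos]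
        calc u * Real.sqrt u * (σ * Real.sqrt σ) ≤ u * Real.sqrt u * (u * Real.sqrt u) :=
              mul_le_mul_of_nonneg_left hss (by positivity)
          _ = u^3 := by
              rw [show u * Real.sqrt u * (u * Real.sqrt u) = (Real.sqrt u * Real.sqrt u) * u^2 by ring,
                Real.mul_self_sqrt hu]
              ring
      nlinarith [mul_nonneg hsqrtσ.le hu]
  have hpoint : ∀ x : ℝ, ENNReal.ofReal (c * Real.exp (-b * x^2) * (2 * Real.sqrt ((-x)^3)))
      ≤ (Iic (0:ℝ)).indicator (fun x => ENNReal.ofReal (g x)) x := by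
    intro x
    rcases le_or_gt x 0 with hx | hx
    · rw [Set.indicator_of_mem (mem_Iic.2 hx)]
      apply ENNReal.ofReal_le_ofReal
      have := hkey (-x) (by linarith)
      have hepos := Real.exp_pos (-b * x^2)
      rw [hg_def]
      nlinarith [mul_pos hc hepos]
    · rw [indicator_of_notMem (by simpa using hx)]
      have hz : Real.sqrt ((-x)^3) = 0 := by
        apply Real.sqrt_eq_zero'.2
        nlinarith [pow_pos hx 3]
      simp [hz]
  -- integrability
  have hk1 : Integrable (fun x : ℝ => x * Real.exp (-b * x^2)) := integrable_mul_exp_neg_mul_sq hb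
  have hk3 : Integrable (fun x : ℝ => x^3 * Real.exp (-b * x^2)) := by
    have := integrable_rpow_mul_exp_neg_mul_sq hb (s := 3) (by norm_num)
    refine this.congr ?_
    filter_upwards with x
    rw [show ((3:ℝ)) = ((3:ℕ):ℝ) by norm_num, Real.rpow_natCast]
  have hneg1 : Integrable (fun x : ℝ => (-x) * Real.exp (-b * (-x)^2)) :=
    ((Measure.measurePreserving_neg (volume : Measure ℝ)).integrable_comp
      hk1.aestronglyMeasurable).2 hk1
  have hneg3 : Integrable (fun x : ℝ => (-x)^3 * Real.exp (-b * (-x)^2)) :=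
    ((Measure.measurePreserving_neg (volume : Measure ℝ)).integrable_comp
      hk3.aestronglyMeasurable).2 hk3
  have hneg1' : Integrable (fun x : ℝ => (-x) * Real.exp (-b * x^2)) := by
    refine hneg1.congr ?_; filter_upwards with x; rw [neg_sq]
  have hneg3' : Integrable (fun x : ℝ => (-x)^3 * Real.exp (-b * x^2)) := by
    refine hneg3.congr ?_; filter_upwards with x; rw [neg_sq]
  have hgint : IntegrableOn g (Iic 0) := by
    apply Integrable.integrableOn
    exact (hneg1'.const_mul _).add (hneg3'.const_mul _)
  have hgnn : 0 ≤ᵐ[volume.restrict (Iic (0:ℝ))] g := by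
    refine (ae_restrict_iff' measurableSet_Iic).2 (ae_of_all _ fun x hx => ?_)
    have hx0 : (0:ℝ) ≤ -x := by simpa using hx
    rw [hg_def]
    have := Real.exp_pos (-b * x^2)
    have h3 : (0:ℝ) ≤ (-x)^3 := by positivity
    positivity
  -- compute the integral
  have hJ1 : ∫ x in Iic (0:ℝ), (-x) * Real.exp (-b * x^2) = (2*b)⁻¹ := by
    have : ∫ x in Iic (0:ℝ), (-x) * Real.exp (-b * x^2)
        = ∫ x in Iic (0:ℝ), (fun t => t * Real.exp (-b * t^2)) (-x) := by
      apply setIntegral_congr_fun measurableSet_Iic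
      intro x _; simp [neg_sq]
    rw [this]
    have h' := integral_comp_neg_Iic (0:ℝ) (fun t => t * Real.exp (-b * t^2))
    exact h'.trans (by rw [neg_zero]; exact gauss_m1 hb)
  have hJ3 : ∫ x in Iic (0:ℝ), (-x)^3 * Real.exp (-b * x^2) = (2*b^2)⁻¹ := by
    have : ∫ x in Iic (0:ℝ), (-x)^3 * Real.exp (-b * x^2)
        = ∫ x in Iic (0:ℝ), (fun t => t^3 * Real.exp (-b * t^2)) (-x) := by
      apply setIntegral_congr_fun measurableSet_Iic
      intro x _; simp only [neg_sq]
    rw [this]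
    have h' := integral_comp_neg_Iic (0:ℝ) (fun t => t^3 * Real.exp (-b * t^2))
    exact h'.trans (by rw [neg_zero]; exact gauss_m3 hb)
  have hIg : ∫ x in Iic (0:ℝ), g x = 3 / Real.pi * Real.sqrt σ := by
    rw [hg_def]
    rw [integral_add ((hneg1'.const_mul _).integrableOn) ((hneg3'.const_mul _).integrableOn),
      integral_const_mul, integral_const_mul, hJ1, hJ3]
    rw [hb_def, hc_def]
    have hπ : Real.pi ≠ 0 := Real.pi_ne_zero
    have hσ' : σ ≠ 0 := hσ.ne'
    have hsσ : Real.sqrt σ ≠ 0 := hsqrtσ.ne'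
    have hss : Real.sqrt σ * Real.sqrt σ = σ := Real.mul_self_sqrt hσ.le
    field_simp
    ring_nf
    rw [Real.sq_sqrt hσ.le]
    ring
  -- put everything together
  calc pLe 2 f 0 σ = ∫⁻ x : ℝ, ∫⁻ y : ℝ, T.indicator D' (x, y) := by rw [h1, h2, h3]
    _ ≤ ∫⁻ x : ℝ, (Iic (0:ℝ)).indicator (fun x => ENNReal.ofReal (g x)) x :=
        lintegral_mono fun x => (hinner x).trans (hpoint x)
    _ = ∫⁻ x in Iic (0:ℝ), ENNReal.ofReal (g x) := lintegral_indicator measurableSet_Iic _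
    _ = ENNReal.ofReal (∫ x in Iic (0:ℝ), g x) :=
        (ofReal_integral_eq_lintegral_ofReal hgint hgnn).symm
    _ = ENNReal.ofReal (3 / Real.pi * Real.sqrt σ) := by rw [hIg]

end Aux

/-- For the cubic saddle `f(x₁,x₂) = x₁³ + x₂²`, the success
probability at the origin decays like `√σ`: there are `C > 0` and `σ₀ ∈ (0,1]` with
`p_f^≤(0,σ) ≤ C·√σ` for all `σ ∈ (0,σ₀]`. Consequently, for every `c_- < 0` the
cumulative success probability `∑_{t} p_f^≤(0, e^{t·c_-})` is finite. -/
theorem cubic_saddle_premature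
    (f : EuclideanSpace ℝ (Fin 2) → ℝ)
    (hf : ∀ x : EuclideanSpace ℝ (Fin 2), f x = (x 0) ^ 3 + (x 1) ^ 2) :
    (∃ C : ℝ, 0 < C ∧ ∃ σ₀ : ℝ, 0 < σ₀ ∧ σ₀ ≤ 1 ∧
      ∀ σ : ℝ, 0 < σ → σ ≤ σ₀ → (pLe 2 f 0 σ).toReal ≤ C * Real.sqrt σ) ∧
    ∀ cm : ℝ, cm < 0 → Summable (fun t : ℕ => (pLe 2 f 0 (Real.exp (t * cm))).toReal) := by
  have key : ∀ σ : ℝ, 0 < σ → (pLe 2 f 0 σ).toReal ≤ 3 / Real.pi * Real.sqrt σ := by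
    intro σ hσ
    refine ENNReal.toReal_le_of_le_ofReal (by positivity) (pLe_bound f hf hσ)
  constructor
  · exact ⟨3 / Real.pi, by positivity, 1, one_pos, le_refl 1, fun σ hσ _ => key σ hσ⟩
  · intro cm hcm
    have hr : Real.exp (cm / 2) < 1 := Real.exp_lt_one_iff.2 (by linarith)
    refine Summable.of_nonneg_of_le (fun t => ENNReal.toReal_nonneg) (fun t => ?_)
      ((summable_geometric_of_lt_one (Real.exp_pos _).le hr).mul_left (3 / Real.pi))
    calc (pLe 2 f 0 (Real.exp (t * cm))).toReal
        ≤ 3 / Real.pi * Real.sqrt (Real.exp (t * cm)) := key _ (Real.exp_pos _)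
      _ = 3 / Real.pi * Real.exp (cm / 2) ^ t := by
          congr 1
          have h1 : Real.exp ((t : ℝ) * cm) = (Real.exp ((t : ℝ) * cm / 2)) ^ 2 := by
            rw [← Real.exp_nat_mul]
            congr 1
            ring
          rw [h1, Real.sqrt_sq (Real.exp_pos _).le,
            show (t : ℝ) * cm / 2 = (t : ℝ) * (cm / 2) by ring, Real.exp_nat_mul]
end
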